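/- Integral of a B-spline from its left knot: let k ≥ 1, j ∈ ℤ, and let x ∈ ℝ satisfy t_j ≤ x ≤ t_{j+k}; let s ∈ ℤ be such that t_{s−1} < x ≤ t_s. Then ∫_{t_j}^{x} B_{j,k}(u) du = ((t_{j+k} − t_j)/k) · Σ_{i=j}^{s−1} B_{i,k+1}(x), where the sum is over integers i with j ≤ i ≤ s−1 (and is empty when s−1 < j). -/

import Mathlib

/-- B-splines of order `k ≥ 1` with knot sequence `t`, defined by the Cox–de Boor recursion:
`B_{j,1}(x) = 1` if `t j ≤ x < t (j+1)` and `0` otherwise; and for `k ≥ 2`,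
`B_{j,k}(x) = ((x − t_j)/(t_{j+k−1} − t_j)) B_{j,k−1}(x)
            + ((t_{j+k} − x)/(t_{j+k} − t_{j+1})) B_{j+1,k−1}(x)`.
(The value for order `0` is irrelevant and set to `0`.) -/
noncomputable def bspline (t : ℤ → ℝ) : ℕ → ℤ → ℝ → ℝ
  | 0, _, _ => 0
  | 1, j, x => if t j ≤ x ∧ x < t (j + 1) then 1 else 0
  | (k + 2), j, x =>
      ((x - t j) / (t (j + (k : ℤ) + 1) - t j)) * bspline t (k + 1) j x +
      ((t (j + (k : ℤ) + 2) - x) / (t (j + (k : ℤ) + 2) - t (j + 1))) *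
        bspline t (k + 1) (j + 1) x

variable {t : ℤ → ℝ}

lemma bspline_left_zero (ht : StrictMono t) :
    ∀ (k : ℕ) (j : ℤ) (x : ℝ), x < t j → bspline t k j x = 0
  | 0, j, x, _ => rfl
  | 1, j, x, h => by simp [bspline, not_le.mpr h]
  | (k + 2), j, x, h => by
    have h1 : x < t (j + 1) := h.trans (ht (by omega))
    rw [bspline, bspline_left_zero ht (k+1) j x h, bspline_left_zero ht (k+1) (j+1) x h1]
    ring

lemma bspline_le_zero (ht : StrictMono t) (m : ℕ) (j : ℤ) (x : ℝ) (h : x ≤ t j) :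
    bspline t (m + 2) j x = 0 := by
  have h1 : x < t (j + 1) := lt_of_le_of_lt h (ht (by omega))
  rcases h.lt_or_eq with h' | h'
  · exact bspline_left_zero ht (m+2) j x h'
  · rw [bspline, bspline_left_zero ht (m+1) (j+1) x h1, h']
    ring

lemma bspline_one_eventually (j : ℤ) (x : ℝ) :
    ∀ᶠ y in nhdsWithin x (Set.Ici x), bspline t 1 j y = bspline t 1 j x := by
  rcases lt_or_ge x (t j) with h | h
  · have : ∀ᶠ y in nhdsWithin x (Set.Ici x), y < t j :=
      ((isOpen_Iio.eventually_mem h).filter_mono nhdsWithin_le_nhds)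
    filter_upwards [this] with y hy
    simp [bspline, not_le.mpr hy, not_le.mpr h]
  · rcases lt_or_ge x (t (j + 1)) with h2 | h2
    · have h3 : ∀ᶠ y in nhdsWithin x (Set.Ici x), y < t (j+1) :=
        ((isOpen_Iio.eventually_mem h2).filter_mono nhdsWithin_le_nhds)
      filter_upwards [h3, eventually_mem_nhdsWithin] with y hy hy'
      simp [bspline, h.trans hy', hy, h, h2]
    · filter_upwards [eventually_mem_nhdsWithin] with y hy
      have : ¬ y < t (j+1) := not_lt.mpr (h2.trans hy)
      simp [bspline, this, not_lt.mpr h2]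

lemma continuous_bspline (ht : StrictMono t) :
    ∀ (m : ℕ) (j : ℤ), Continuous (bspline t (m + 2) j)
  | 0, j => by
    have hab : t j < t (j+1) := ht (by omega)
    have hbc : t (j+1) < t (j+2) := ht (by omega)
    have key : bspline t 2 j = fun x =>
        max 0 (min ((x - t j)/(t (j+1) - t j)) ((t (j+2) - x)/(t (j+2) - t (j+1)))) := by
      funext x
      have e1 : j + ((0:ℕ):ℤ) + 1 = j + 1 := by omega
      have e2 : j + ((0:ℕ):ℤ) + 2 = j + 2 := by omega
      rw [bspline, e1, e2]
      set a := t j; set b := t (j+1); set c := t (j+2)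
      rcases lt_or_ge x a with h | h
      · rw [bspline_left_zero ht 1 j x h, bspline_left_zero ht 1 (j+1) x (h.trans hab)]
        have : min ((x-a)/(b-a)) ((c-x)/(c-b)) ≤ (x-a)/(b-a) := min_le_left _ _
        have hneg : (x-a)/(b-a) < 0 := div_neg_of_neg_of_pos (by linarith) (by linarith)
        rw [max_eq_left (by linarith)]; ring
      · rcases lt_or_ge x b with h2 | h2
        · have v1 : bspline t 1 j x = 1 := by simp [bspline, h, h2]; exact ⟨h, h2⟩
          have v2 : bspline t 1 (j+1) x = 0 := bspline_left_zero ht 1 (j+1) x h2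
          have hq : (x-a)/(b-a) ≤ (c-x)/(c-b) := by
            have hx1 : (x-a)/(b-a) ≤ 1 := by
              rw [div_le_one (by linarith)]; linarith
            have hx2 : (1:ℝ) ≤ (c-x)/(c-b) := by
              rw [le_div_iff₀ (by linarith)]; linarith
            linarith
          rw [v1, v2, min_eq_left hq, max_eq_right (div_nonneg (by linarith) (by linarith))]
          ring
        · rcases lt_or_ge x c with h3 | h3
          · have v1 : bspline t 1 j x = 0 := by simp [bspline, not_lt.mpr h2]; exact fun _ => h2
            have e3 : j + 1 + 1 = j + 2 := by ring
            have v2 : bspline t 1 (j+1) x = 1 := by simp [bspline, e3, h2, h3]; exact ⟨h2, h3⟩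
            have hq : (c-x)/(c-b) ≤ (x-a)/(b-a) := by
              have hx1 : (c-x)/(c-b) ≤ 1 := by
                rw [div_le_one (by linarith)]; linarith
              have hx2 : (1:ℝ) ≤ (x-a)/(b-a) := by
                rw [le_div_iff₀ (by linarith)]; linarith
              linarith
            rw [v1, v2, min_eq_right hq, max_eq_right (div_nonneg (by linarith) (by linarith))]
            ring
          · have v1 : bspline t 1 j x = 0 := by simp [bspline, not_lt.mpr h2]; exact fun _ => h2
            have e3 : j + 1 + 1 = j + 2 := by ring
            have v2 : bspline t 1 (j+1) x = 0 := by simp [bspline, e3, not_lt.mpr h3]; exact fun _ => h3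
            have : min ((x-a)/(b-a)) ((c-x)/(c-b)) ≤ (c-x)/(c-b) := min_le_right _ _
            have hneg : (c-x)/(c-b) ≤ 0 := div_nonpos_of_nonpos_of_nonneg (by linarith) (by linarith)
            rw [v1, v2, max_eq_left (by linarith)]; ring
    rw [key]
    fun_prop
  | (m + 1), j => by
    have h1 := continuous_bspline ht m j
    have h2 := continuous_bspline ht m (j + 1)
    have : bspline t (m + 1 + 2) j = fun x =>
        ((x - t j) / (t (j + ((m+1:ℕ):ℤ) + 1) - t j)) * bspline t (m + 2) j x +
        ((t (j + ((m+1:ℕ):ℤ) + 2) - x) / (t (j + ((m+1:ℕ):ℤ) + 2) - t (j + 1))) *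
          bspline t (m + 2) (j + 1) x := by
      funext x; rw [bspline]
    rw [this]
    fun_prop

lemma hasDerivWithinAt_bspline (ht : StrictMono t) (m : ℕ) :
    ∀ (j : ℤ) (x : ℝ),
      HasDerivWithinAt (bspline t (m + 2) j)
        (((m : ℝ) + 1) * (bspline t (m + 1) j x / (t (j + (m : ℤ) + 1) - t j)
          - bspline t (m + 1) (j + 1) x / (t (j + (m : ℤ) + 2) - t (j + 1))))
        (Set.Ici x) x := by
  induction m with
  | zero =>
    intro j x
    set c1 := bspline t 1 j x with hc1
    set c2 := bspline t 1 (j + 1) x with hc2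
    have l1 : HasDerivAt (fun y : ℝ => (y - t j) / (t (j + ((0:ℕ):ℤ) + 1) - t j) * c1)
        (1 / (t (j + ((0:ℕ):ℤ) + 1) - t j) * c1) x :=
      (((hasDerivAt_id x).sub_const _).div_const _).mul_const _
    have l2 : HasDerivAt
        (fun y : ℝ => (t (j + ((0:ℕ):ℤ) + 2) - y) / (t (j + ((0:ℕ):ℤ) + 2) - t (j + 1)) * c2)
        ((0 - 1) / (t (j + ((0:ℕ):ℤ) + 2) - t (j + 1)) * c2) x :=
      (((hasDerivAt_const x _).sub (hasDerivAt_id x)).div_const _).mul_const _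
    have H := ((l1.add l2).hasDerivWithinAt (s := Set.Ici x))
    have heq : bspline t (0 + 2) j =ᶠ[nhdsWithin x (Set.Ici x)]
        (fun y => (y - t j) / (t (j + ((0:ℕ):ℤ) + 1) - t j) * c1 +
          (t (j + ((0:ℕ):ℤ) + 2) - y) / (t (j + ((0:ℕ):ℤ) + 2) - t (j + 1)) * c2) := by
      filter_upwards [bspline_one_eventually j x, bspline_one_eventually (j + 1) x] with y h1 h2
      rw [show ((0:ℕ)+2) = 2 from rfl, bspline, h1, h2, hc1, hc2]
    have hx : bspline t (0 + 2) j x =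
        (x - t j) / (t (j + ((0:ℕ):ℤ) + 1) - t j) * c1 +
          (t (j + ((0:ℕ):ℤ) + 2) - x) / (t (j + ((0:ℕ):ℤ) + 2) - t (j + 1)) * c2 := by
      rw [show ((0:ℕ)+2) = 2 from rfl, bspline, hc1, hc2]
    have H2 := H.congr_of_eventuallyEq heq hx
    refine H2.congr_deriv ?_
    push_cast
    ring
  | succ m ih =>
    intro j x
    have ih1 := ih j x
    have ih2 := ih (j + 1) x
    have E1 : j + 1 + (m : ℤ) + 1 = j + (m : ℤ) + 2 := by ring
    have E2 : j + 1 + (m : ℤ) + 2 = j + (m : ℤ) + 3 := by ring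
    have E3 : (j + 1) + 1 = j + 2 := by ring
    rw [E1, E2, E3] at ih2
    have F1 : j + ((m + 1 : ℕ) : ℤ) + 1 = j + (m : ℤ) + 2 := by push_cast; ring
    have F2 : j + ((m + 1 : ℕ) : ℤ) + 2 = j + (m : ℤ) + 3 := by push_cast; ring
    -- nonzero denominators
    have d0 : t (j + (m : ℤ) + 1) - t j ≠ 0 := sub_ne_zero.mpr (ne_of_gt (ht (by omega)))
    have d1 : t (j + (m : ℤ) + 2) - t (j + 1) ≠ 0 := sub_ne_zero.mpr (ne_of_gt (ht (by omega)))
    have d2 : t (j + (m : ℤ) + 2) - t j ≠ 0 := sub_ne_zero.mpr (ne_of_gt (ht (by omega)))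
    have d3 : t (j + (m : ℤ) + 3) - t (j + 1) ≠ 0 := sub_ne_zero.mpr (ne_of_gt (ht (by omega)))
    have d4 : t (j + (m : ℤ) + 3) - t (j + 2) ≠ 0 := sub_ne_zero.mpr (ne_of_gt (ht (by omega)))
    have lin1 : HasDerivWithinAt (fun y : ℝ => (y - t j) / (t (j + (m : ℤ) + 2) - t j))
        (1 / (t (j + (m : ℤ) + 2) - t j)) (Set.Ici x) x :=
      ((((hasDerivAt_id x).sub_const _).div_const _)).hasDerivWithinAt
    have lin2 : HasDerivWithinAt
        (fun y : ℝ => (t (j + (m : ℤ) + 3) - y) / (t (j + (m : ℤ) + 3) - t (j + 1)))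
        ((0 - 1) / (t (j + (m : ℤ) + 3) - t (j + 1))) (Set.Ici x) x :=
      ((((hasDerivAt_const x _).sub (hasDerivAt_id x)).div_const _)).hasDerivWithinAt
    have H := (lin1.mul ih1).add (lin2.mul ih2)
    have hfun : ∀ y, bspline t (m + 1 + 2) j y =
        (y - t j) / (t (j + (m : ℤ) + 2) - t j) * bspline t (m + 2) j y +
        (t (j + (m : ℤ) + 3) - y) / (t (j + (m : ℤ) + 3) - t (j + 1)) *
          bspline t (m + 2) (j + 1) y := by
      intro y; rw [bspline, F1, F2]
    have H2 := H.congr (fun y _ => hfun y) (hfun x)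
    refine H2.congr_deriv ?_
    rw [show m + 1 + 1 = m + 2 from rfl, bspline, bspline, E1, E2, E3, F1, F2]
    push_cast
    field_simp
    ring

lemma sum_telescope_Icc (f : ℤ → ℝ) (j : ℤ) :
    ∀ m : ℕ, ∑ i ∈ Finset.Icc j (j + (m : ℤ)), (f i - f (i + 1)) = f j - f (j + (m : ℤ) + 1)
  | 0 => by simp
  | (m + 1) => by
    have F1 : j + ((m + 1 : ℕ) : ℤ) = j + (m : ℤ) + 1 := by push_cast; ring
    have h : Finset.Icc j (j + (m : ℤ) + 1) =
        insert (j + (m : ℤ) + 1) (Finset.Icc j (j + (m : ℤ))) := by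
      ext i; simp only [Finset.mem_Icc, Finset.mem_insert]; omega
    rw [F1, h, Finset.sum_insert (by simp), sum_telescope_Icc f j m]
    ring

lemma intervalIntegrable_bspline (ht : StrictMono t) (m : ℕ) (j : ℤ) (a b : ℝ) :
    IntervalIntegrable (bspline t (m + 1) j) MeasureTheory.volume a b := by
  cases m with
  | zero =>
    have hfun : bspline t 1 j = Set.indicator (Set.Ico (t j) (t (j + 1))) (fun _ => (1 : ℝ)) := by
      funext x; simp [bspline, Set.indicator, Set.mem_Ico]
    rw [hfun]
    apply MeasureTheory.Integrable.intervalIntegrable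
    rw [MeasureTheory.integrable_indicator_iff measurableSet_Ico]
    exact MeasureTheory.integrableOn_const measure_Ico_lt_top.ne
  | succ m => exact (continuous_bspline ht m j).intervalIntegrable a b

/-- Integral of a B-spline from its left knot: for order `k ≥ 1`, `t_j ≤ x ≤ t_{j+k}`
and `s` such that `t_{s−1} < x ≤ t_s`,
`∫_{t_j}^{x} B_{j,k}(u) du = ((t_{j+k} − t_j)/k) Σ_{i=j}^{s−1} B_{i,k+1}(x)`. -/
theorem bspline_integral_from_left_knot (t : ℤ → ℝ) (ht : StrictMono t) (k : ℕ)
    (hk : 1 ≤ k) (j s : ℤ) (x : ℝ) (hx₁ : t j ≤ x) (hx₂ : x ≤ t (j + (k : ℤ)))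
    (hs₁ : t (s - 1) < x) (hs₂ : x ≤ t s) :
    ∫ u in (t j)..x, bspline t k j u =
      ((t (j + (k : ℤ)) - t j) / (k : ℝ)) *
        ∑ i ∈ Finset.Icc j (s - 1), bspline t (k + 1) i x := by

  obtain ⟨m, rfl⟩ : ∃ m, k = m + 1 := ⟨k - 1, by omega⟩
  have F0 : j + ((m + 1 : ℕ) : ℤ) = j + (m : ℤ) + 1 := by push_cast; ring
  rw [F0] at hx₂ ⊢
  rw [show m + 1 + 1 = m + 2 from rfl]
  have hΔ : (0 : ℝ) < t (j + (m : ℤ) + 1) - t j := sub_pos.mpr (ht (by omega))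
  have hm1 : ((m : ℝ) + 1) ≠ 0 := by positivity
  set G : ℝ → ℝ := fun y => ∑ i ∈ Finset.Icc j (j + (m : ℤ)), bspline t (m + 2) i y with hG
  -- step 1 : the sum over Icc j (s-1) equals G x
  have hsle : s - 1 ≤ j + (m : ℤ) := by
    by_contra h
    push_neg at h
    have : t (j + (m : ℤ) + 1) ≤ t (s - 1) := ht.monotone (by omega)
    linarith
  have hsum : ∑ i ∈ Finset.Icc j (s - 1), bspline t (m + 2) i x = G x := by
    refine Finset.sum_subset (Finset.Icc_subset_Icc_right hsle) ?_
    intro i hi hni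
    simp only [Finset.mem_Icc] at hi hni
    have hsi : s ≤ i := by omega
    exact bspline_le_zero ht m i x (hs₂.trans (ht.monotone hsi))
  -- step 2 : FTC
  set C : ℝ := ((m : ℝ) + 1) / (t (j + (m : ℤ) + 1) - t j) with hC
  set g : ℝ → ℝ := fun u => C * bspline t (m + 1) j u with hg
  have hderiv : ∀ u ∈ Set.Ioo (t j) x, HasDerivWithinAt G (g u) (Set.Ioi u) u := by
    intro u hu
    set f : ℤ → ℝ := fun i => ((m : ℝ) + 1) * (bspline t (m + 1) i u / (t (i + (m : ℤ) + 1) - t i))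
      with hf
    have hD : HasDerivWithinAt G (∑ i ∈ Finset.Icc j (j + (m : ℤ)), (f i - f (i + 1)))
        (Set.Ici u) u := by
      apply HasDerivWithinAt.fun_sum
      intro i _
      have h := hasDerivWithinAt_bspline ht m i u
      refine h.congr_deriv ?_
      have E1 : i + 1 + (m : ℤ) + 1 = i + (m : ℤ) + 2 := by ring
      rw [hf]
      simp only [E1]
      ring
    rw [sum_telescope_Icc f j m] at hD
    have hz : f (j + (m : ℤ) + 1) = 0 := by
      rw [hf]
      simp only
      rw [bspline_left_zero ht (m + 1) (j + (m : ℤ) + 1) u (lt_of_lt_of_le hu.2 hx₂)]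
      ring
    have hval : f j - f (j + (m : ℤ) + 1) = g u := by
      rw [hz, hf, hg, hC]; simp only; ring
    rw [hval] at hD
    exact hD.mono Set.Ioi_subset_Ici_self
  have hcont : ContinuousOn G (Set.Icc (t j) x) :=
    (continuous_finset_sum _ (fun i _ => continuous_bspline ht m i)).continuousOn
  have hint : IntervalIntegrable g MeasureTheory.volume (t j) x :=
    (intervalIntegrable_bspline ht m j (t j) x).const_mul C
  have FTC := intervalIntegral.integral_eq_sub_of_hasDeriv_right_of_le hx₁ hcont hderiv hint
  have hG0 : G (t j) = 0 := by
    apply Finset.sum_eq_zero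
    intro i hi
    simp only [Finset.mem_Icc] at hi
    exact bspline_le_zero ht m i (t j) (ht.monotone hi.1)
  rw [hG0, sub_zero, hg, intervalIntegral.integral_const_mul] at FTC
  rw [hsum, ← FTC]
  push_cast
  rw [hC]
  field_simp
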